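/- Let q \in (0,1), m \in \mathbb{N} with m \ge 2, and define \psi_m(k) = q^k (1 + \sum_{j=1}^{m-1} ((1-q^2)^j/(j! 2^j)) \prod_{l=0}^{j-1} (k+2l)) for k \ge 1 (the coefficients of the polyharmonic Poisson kernel). Then for every N \ge 1, \sup_{k \ge N} |\psi_m(k+1)/\psi_m(k) - q| \le (2m-3) q / N. -/

import Mathlib

private lemma poly_prod_pos (x : ℝ) (hx : 0 < x) (j : ℕ) :
    0 < ∏ l ∈ Finset.range j, (x + 2 * (l : ℝ)) :=
  Finset.prod_pos fun l _ => by positivity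

private lemma poly_prod_shift (x : ℝ) (hx : 1 ≤ x) (j : ℕ) :
    ∏ l ∈ Finset.range j, (x + 1 + 2 * (l : ℝ)) ≤
      (1 + j / x) * ∏ l ∈ Finset.range j, (x + 2 * (l : ℝ)) := by
  have hx0 : (0:ℝ) < x := lt_of_lt_of_le one_pos hx
  induction j with
  | zero => simp
  | succ j ih =>
    rw [Finset.prod_range_succ, Finset.prod_range_succ]
    have hp := (poly_prod_pos x hx0 j).le
    have h1 : (0:ℝ) ≤ x + 1 + 2 * (j:ℝ) := by positivity
    have key : (1 + (j:ℝ) / x) * (x + 1 + 2 * j) ≤ (1 + ((j:ℝ) + 1) / x) * (x + 2 * j) := by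
      have e1 : (1 + (j:ℝ) / x) = (x + j) / x := by field_simp
      have e2 : (1 + ((j:ℝ) + 1) / x) = (x + j + 1) / x := by field_simp; ring
      rw [e1, e2, div_mul_eq_mul_div, div_mul_eq_mul_div, div_le_div_iff₀ hx0 hx0]
      nlinarith [mul_nonneg (Nat.cast_nonneg j : (0:ℝ) ≤ j) hx0.le]
    calc (∏ l ∈ Finset.range j, (x + 1 + 2 * (l:ℝ))) * (x + 1 + 2 * j)
        ≤ ((1 + (j:ℝ) / x) * ∏ l ∈ Finset.range j, (x + 2 * (l:ℝ))) * (x + 1 + 2 * j) :=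
          mul_le_mul_of_nonneg_right ih h1
      _ = (∏ l ∈ Finset.range j, (x + 2 * (l:ℝ))) * ((1 + (j:ℝ) / x) * (x + 1 + 2 * j)) := by
          ring
      _ ≤ (∏ l ∈ Finset.range j, (x + 2 * (l:ℝ))) * ((1 + ((j:ℝ) + 1) / x) * (x + 2 * j)) :=
          mul_le_mul_of_nonneg_left key hp
      _ = (1 + (↑(j + 1)) / x) * ((∏ l ∈ Finset.range j, (x + 2 * (l:ℝ))) * (x + 2 * j)) := by
          push_cast; ring

theorem polyharmonic_eps (q : ℝ) (hq0 : 0 < q) (hq1 : q < 1)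
    (m : ℕ) (hm : 2 ≤ m) (ψ : ℕ → ℝ)
    (hψ : ∀ k, 1 ≤ k → ψ k = q ^ k *
      (1 + ∑ j ∈ Finset.Icc 1 (m - 1),
        (1 - q ^ 2) ^ j / (j.factorial * 2 ^ j) *
          ∏ l ∈ Finset.range j, ((k : ℝ) + 2 * l))) :
    ∀ N : ℕ, 1 ≤ N → ∀ k, N ≤ k →
      |ψ (k + 1) / ψ k - q| ≤ (2 * (m : ℝ) - 3) * q / N := by
  intro N hN k hkN
  have hk1 : 1 ≤ k := le_trans hN hkN
  have hx : (1:ℝ) ≤ (k:ℝ) := by exact_mod_cast hk1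
  have hx0 : (0:ℝ) < (k:ℝ) := lt_of_lt_of_le one_pos hx
  have hN0 : (0:ℝ) < (N:ℝ) := by exact_mod_cast hN
  have hxN : (N:ℝ) ≤ (k:ℝ) := by exact_mod_cast hkN
  have hmr : (2:ℝ) ≤ (m:ℝ) := by exact_mod_cast hm
  set c : ℕ → ℝ := fun j => (1 - q ^ 2) ^ j / (j.factorial * 2 ^ j) with hc
  have hcpos : ∀ j, 0 ≤ c j := by
    intro j
    have h : (0:ℝ) ≤ 1 - q ^ 2 := by nlinarith
    simp only [hc]
    positivity
  set A := ∑ j ∈ Finset.Icc 1 (m - 1), c j * ∏ l ∈ Finset.range j, ((k:ℝ) + 2 * l) with hAdef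
  set B := ∑ j ∈ Finset.Icc 1 (m - 1), c j * ∏ l ∈ Finset.range j, ((k:ℝ) + 1 + 2 * l) with hBdef
  have hψk : ψ k = q ^ k * (1 + A) := hψ k hk1
  have hψk1 : ψ (k + 1) = q ^ (k + 1) * (1 + B) := by
    rw [hψ (k + 1) (by omega)]
    congr 2
    refine Finset.sum_congr rfl fun j _ => ?_
    congr 1
    refine Finset.prod_congr rfl fun l _ => ?_
    push_cast; ring
  have hA0 : 0 ≤ A :=
    Finset.sum_nonneg fun j _ => mul_nonneg (hcpos j) (poly_prod_pos _ hx0 j).le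
  have hAB : A ≤ B := by
    refine Finset.sum_le_sum fun j _ => ?_
    refine mul_le_mul_of_nonneg_left ?_ (hcpos j)
    refine Finset.prod_le_prod (fun l _ => by positivity) (fun l _ => by linarith)
  set t : ℝ := ((m:ℝ) - 1) / (k:ℝ) with htdef
  have ht0 : 0 ≤ t := div_nonneg (by linarith) hx0.le
  have hBsum : B ≤ (1 + t) * A := by
    rw [hAdef, Finset.mul_sum]
    refine Finset.sum_le_sum fun j hj => ?_
    have hjm : (j:ℝ) ≤ (m:ℝ) - 1 := by
      have h1 : j ≤ m - 1 := (Finset.mem_Icc.1 hj).2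
      have h2 : (j:ℝ) ≤ ((m - 1 : ℕ):ℝ) := by exact_mod_cast h1
      have h3 : ((m - 1 : ℕ):ℝ) = (m:ℝ) - 1 := by
        have : 1 ≤ m := by omega
        push_cast [this]; ring
      linarith [h2, h3.le, h3.ge]
    have hp := (poly_prod_pos ((k:ℝ)) hx0 j).le
    calc c j * ∏ l ∈ Finset.range j, ((k:ℝ) + 1 + 2 * l)
        ≤ c j * ((1 + (j:ℝ) / (k:ℝ)) * ∏ l ∈ Finset.range j, ((k:ℝ) + 2 * l)) :=
          mul_le_mul_of_nonneg_left (poly_prod_shift _ hx j) (hcpos j)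
      _ = (1 + (j:ℝ) / (k:ℝ)) * (c j * ∏ l ∈ Finset.range j, ((k:ℝ) + 2 * l)) := by ring
      _ ≤ (1 + t) * (c j * ∏ l ∈ Finset.range j, ((k:ℝ) + 2 * l)) := by
          refine mul_le_mul_of_nonneg_right ?_ (mul_nonneg (hcpos j) hp)
          have : (j:ℝ) / (k:ℝ) ≤ t := by
            rw [htdef]; gcongr
          linarith
  have h1A : (0:ℝ) < 1 + A := by linarith
  have hS : 1 + B ≤ (1 + t) * (1 + A) := by
    have e : (1 + t) * (1 + A) = (1 + t) + (1 + t) * A := by ring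
    linarith [hBsum, e.le, e.ge]
  have hratio : ψ (k + 1) / ψ k = q * ((1 + B) / (1 + A)) := by
    rw [hψk1, hψk, pow_succ]
    have hqk : q ^ k ≠ 0 := pow_ne_zero _ hq0.ne'
    field_simp
  have hge : q ≤ ψ (k + 1) / ψ k := by
    rw [hratio]
    have h1 : (1:ℝ) ≤ (1 + B) / (1 + A) := by
      rw [le_div_iff₀ h1A]; linarith
    nlinarith
  rw [abs_of_nonneg (by linarith)]
  have hub : ψ (k + 1) / ψ k ≤ q * (1 + t) := by
    rw [hratio]
    refine mul_le_mul_of_nonneg_left ?_ hq0.le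
    rw [div_le_iff₀ h1A]
    exact hS
  have hstep1 : q * (1 + t) - q = q * (((m:ℝ) - 1) / (k:ℝ)) := by rw [htdef]; ring
  have hstep2 : q * (((m:ℝ) - 1) / (k:ℝ)) ≤ q * (((m:ℝ) - 1) / (N:ℝ)) := by
    refine mul_le_mul_of_nonneg_left ?_ hq0.le
    exact div_le_div_of_nonneg_left (by linarith) hN0 hxN
  have hstep3 : q * (((m:ℝ) - 1) / (N:ℝ)) ≤ (2 * (m:ℝ) - 3) * q / (N:ℝ) := by
    have hnum : q * ((m:ℝ) - 1) ≤ (2 * (m:ℝ) - 3) * q := by nlinarith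
    calc q * (((m:ℝ) - 1) / (N:ℝ)) = q * ((m:ℝ) - 1) / (N:ℝ) := by ring
      _ ≤ (2 * (m:ℝ) - 3) * q / (N:ℝ) := by gcongr
  linarith
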